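/- Completeness of NRA_{m,n}: for any formula ψ, if ψ is valid on all finite Sub(ψ)-(m,n)-accessible N-frames, then NRA_{m,n} ⊢ ψ. -/

import Mathlib

inductive Formula : Type
  | bot : Formula
  | var : ℕ → Formula
  | neg : Formula → Formula
  | or : Formula → Formula → Formula
  | box : Formula → Formula
  deriving DecidableEq

namespace Formula

def imp (φ ψ : Formula) : Formula := .or (.neg φ) ψ

def and (φ ψ : Formula) : Formula := .neg (.or (.neg φ) (.neg ψ))

/-- □^n φ -/
def boxn : ℕ → Formula → Formula
  | 0, φ => φ
  | k+1, φ => .box (boxn k φ)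

/-- the set of subformulas -/
def sub : Formula → Finset Formula
  | .bot => {.bot}
  | .var p => {.var p}
  | .neg φ => insert (.neg φ) φ.sub
  | .or φ ψ => insert (.or φ ψ) (φ.sub ∪ ψ.sub)
  | .box φ => insert (.box φ) φ.sub

/-- ∼ρ -/
def negg : Formula → Formula
  | .neg φ => φ
  | φ => .neg φ

end Formula

def NSub (ψ : Formula) : Finset Formula := ψ.sub ∪ ψ.sub.image Formula.negg

/-- boolean evaluation treating boxed formulas and variables as atoms -/
def evalP (v : Formula → Bool) : Formula → Bool
  | .bot => false
  | .var p => v (.var p)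
  | .neg φ => !(evalP v φ)
  | .or φ ψ => evalP v φ || evalP v ψ
  | .box φ => v (.box φ)

/-- propositional tautologies in the modal language -/
def Tautology (φ : Formula) : Prop := ∀ v, evalP v φ = true

/-- Provability in NA_{m,n} (ros = false) and NRA_{m,n} (ros = true):
    propositional tautologies, the scheme □^n φ → □^m φ, modus ponens,
    necessitation, and (if ros) the rule Ros^□ : ¬□φ / ¬□□φ. -/
inductive Prov (m n : ℕ) (ros : Bool) : Formula → Prop
  | taut {φ} : Tautology φ → Prov m n ros φ
  | axA (φ) : Prov m n ros ((Formula.boxn n φ).imp (Formula.boxn m φ))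
  | mp {φ ψ} : Prov m n ros (φ.imp ψ) → Prov m n ros φ → Prov m n ros ψ
  | nec {φ} : Prov m n ros φ → Prov m n ros (.box φ)
  | ros {φ} : ros = true → Prov m n ros (.neg (.box φ)) →
      Prov m n ros (.neg (.box (.box φ)))

/-- An N-frame on world set W: a binary relation R_φ for each formula φ. -/
abbrev NFrame (W : Type) := Formula → W → W → Prop

structure NModel (W : Type) where
  Rel : NFrame W
  V : W → ℕ → Prop

/-- satisfaction in an N-model -/
def Sat {W : Type} (M : NModel W) : W → Formula → Prop
  | _, .bot => False
  | w, .var p => M.V w p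
  | w, .neg φ => ¬ Sat M w φ
  | w, .or φ ψ => Sat M w φ ∨ Sat M w ψ
  | w, .box φ => ∀ w', M.Rel φ w w' → Sat M w' φ

/-- x R_φ^k y : there is a φ-path of length k from x to y -/
def FPath {W : Type} (R : NFrame W) (φ : Formula) : ℕ → W → W → Prop
  | 0, x, y => x = y
  | k+1, x, y => ∃ w, R (Formula.boxn k φ) x w ∧ FPath R φ k w y

/-- (m,n)-accessibility for φ -/
def AccFor {W : Type} (R : NFrame W) (m n : ℕ) (φ : Formula) : Prop :=
  ∀ x y, FPath R φ m x y → FPath R φ n x y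

/-- Γ-(m,n)-accessibility -/
def SubAcc {W : Type} (R : NFrame W) (m n : ℕ) (Γ : Finset Formula) : Prop :=
  ∀ φ, Formula.boxn m φ ∈ Γ → AccFor R m n φ

/-- (m,n)-accessibility -/
def Accessible {W : Type} (R : NFrame W) (m n : ℕ) : Prop :=
  ∀ φ, AccFor R m n φ

def ValidM {W : Type} (M : NModel W) (ψ : Formula) : Prop := ∀ w, Sat M w ψ

def ValidF {W : Type} (R : NFrame W) (ψ : Formula) : Prop :=
  ∀ V : W → ℕ → Prop, ValidM ⟨R, V⟩ ψ



namespace NRA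
open Formula

/-! ### formula size, core/degree, subformula lemmas -/

def fsize : Formula → ℕ
  | .bot => 1
  | .var _ => 1
  | .neg φ => fsize φ + 1
  | .or φ χ => fsize φ + fsize χ + 1
  | .box φ => fsize φ + 1

def core : Formula → Formula
  | .box φ => core φ
  | φ => φ

def deg : Formula → ℕ
  | .box φ => deg φ + 1
  | _ => 0

@[simp] lemma boxn_succ (k : ℕ) (φ : Formula) : boxn (k+1) φ = .box (boxn k φ) := rfl
@[simp] lemma boxn_zero (φ : Formula) : boxn 0 φ = φ := rfl

lemma boxn_add (a b : ℕ) (φ : Formula) : boxn (a + b) φ = boxn a (boxn b φ) := by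
  induction a with
  | zero => simp
  | succ a ih => rw [Nat.succ_add]; simp [ih]

lemma core_boxn (k : ℕ) (φ : Formula) : core (boxn k φ) = core φ := by
  induction k with
  | zero => rfl
  | succ k ih => simpa [core] using ih

lemma deg_boxn (k : ℕ) (φ : Formula) : deg (boxn k φ) = k + deg φ := by
  induction k with
  | zero => simp [deg]
  | succ k ih => simp [deg, ih]; omega

lemma core_core (χ : Formula) : core (core χ) = core χ := by
  induction χ with
  | box φ ih => simpa [core] using ih
  | bot => rfl
  | var p => rfl
  | neg φ _ => rfl
  | or φ χ _ _ => rfl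

lemma deg_core (χ : Formula) : deg (core χ) = 0 := by
  induction χ with
  | box φ ih => simpa [core] using ih
  | bot => rfl
  | var p => rfl
  | neg φ _ => rfl
  | or φ χ _ _ => rfl

lemma boxn_core_deg (χ : Formula) : boxn (deg χ) (core χ) = χ := by
  induction χ with
  | box φ ih => simpa [deg, core] using ih
  | bot => rfl
  | var p => rfl
  | neg φ _ => rfl
  | or φ χ _ _ => rfl

lemma fsize_boxn (k : ℕ) (φ : Formula) : fsize (boxn k φ) = k + fsize φ := by
  induction k with
  | zero => simp
  | succ k ih => simp [fsize, ih]; omega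

lemma fsize_core_le (χ : Formula) : fsize (core χ) ≤ fsize χ := by
  induction χ with
  | box φ ih => simp [core, fsize]; omega
  | bot => simp [core]
  | var p => simp [core]
  | neg φ _ => simp [core]
  | or φ χ _ _ => simp [core]

lemma mem_sub_self (φ : Formula) : φ ∈ φ.sub := by
  cases φ <;> simp [Formula.sub]

lemma fsize_le_of_mem_sub {β α : Formula} (h : β ∈ α.sub) : fsize β ≤ fsize α := by
  induction α with
  | bot => simp [Formula.sub] at h; subst h; rfl
  | var p => simp [Formula.sub] at h; subst h; rfl
  | neg φ ih =>
      simp [Formula.sub] at h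
      rcases h with h | h
      · subst h; rfl
      · have := ih h; simp [fsize]; omega
  | or φ χ ih1 ih2 =>
      simp [Formula.sub] at h
      rcases h with h | h | h
      · subst h; rfl
      · have := ih1 h; simp [fsize]; omega
      · have := ih2 h; simp [fsize]; omega
  | box φ ih =>
      simp [Formula.sub] at h
      rcases h with h | h
      · subst h; rfl
      · have := ih h; simp [fsize]; omega

lemma sub_subset_of_mem {β α : Formula} (h : β ∈ α.sub) : β.sub ⊆ α.sub := by
  induction α with
  | bot => simp [Formula.sub] at h; subst h; exact fun x hx => hx
  | var p => simp [Formula.sub] at h; subst h; exact fun x hx => hx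
  | neg φ ih =>
      simp [Formula.sub] at h
      rcases h with h | h
      · subst h; exact fun x hx => hx
      · exact fun x hx => by
          have := ih h hx
          simp [Formula.sub]; right; exact this
  | or φ χ ih1 ih2 =>
      simp [Formula.sub] at h
      rcases h with h | h | h
      · subst h; exact fun x hx => hx
      · exact fun x hx => by
          have := ih1 h hx; simp [Formula.sub]; right; left; exact this
      · exact fun x hx => by
          have := ih2 h hx; simp [Formula.sub]; right; right; exact this
  | box φ ih =>
      simp [Formula.sub] at h
      rcases h with h | h
      · subst h; exact fun x hx => hx
      · exact fun x hx => by
          have := ih h hx; simp [Formula.sub]; right; exact this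

lemma mem_sub_of_boxn_le {j k : ℕ} {φ α : Formula} (hjk : j ≤ k)
    (h : boxn k φ ∈ α.sub) : boxn j φ ∈ α.sub := by
  induction k with
  | zero => cases Nat.le_zero.mp hjk; exact h
  | succ k ih =>
      rcases Nat.lt_or_ge j (k+1) with hj | hj
      · apply ih (by omega)
        have : boxn k φ ∈ (boxn (k+1) φ).sub := by
          simp [Formula.sub, mem_sub_self]
        exact sub_subset_of_mem h this
      · have : j = k + 1 := by omega
        subst this; exact h

lemma box_mem_sub_of_mem_NSub {ψ β : Formula} (h : Formula.box β ∈ NSub ψ) :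
    Formula.box β ∈ ψ.sub := by
  simp [NSub] at h
  rcases h with h | ⟨γ, hγ, hγ2⟩
  · exact h
  · -- negg γ = box β
    cases γ with
    | neg δ =>
        simp [Formula.negg] at hγ2
        subst hγ2
        exact sub_subset_of_mem hγ (by simp [Formula.sub, mem_sub_self])
    | bot => simp [Formula.negg] at hγ2
    | var p => simp [Formula.negg] at hγ2
    | or a b => simp [Formula.negg] at hγ2
    | box a => simp [Formula.negg] at hγ2

lemma negg_mem_NSub {ψ α : Formula} (h : α ∈ ψ.sub) : Formula.negg α ∈ NSub ψ := by
  simp [NSub]; right; exact ⟨α, h, rfl⟩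

lemma sub_subset_NSub (ψ : Formula) : ψ.sub ⊆ NSub ψ := by
  intro x hx; simp [NSub]; left; exact hx

@[simp] lemma negg_neg (φ : Formula) : Formula.negg (.neg φ) = φ := rfl
@[simp] lemma negg_bot : Formula.negg .bot = .neg .bot := rfl
@[simp] lemma negg_var (p : ℕ) : Formula.negg (.var p) = .neg (.var p) := rfl
@[simp] lemma negg_or (a b : Formula) : Formula.negg (.or a b) = .neg (.or a b) := rfl
@[simp] lemma negg_box (a : Formula) : Formula.negg (.box a) = .neg (.box a) := rfl

@[simp] lemma evalP_negg (v : Formula → Bool) (φ : Formula) :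
    evalP v (Formula.negg φ) = !(evalP v φ) := by
  cases φ <;> simp [Formula.negg, evalP]

end NRA
namespace NRA
open Formula

/-! ### provability combinators -/

def conjL : List Formula → Formula
  | [] => .neg .bot
  | a :: l => Formula.and a (conjL l)

section
variable {m n : ℕ}

lemma t_mp {a b : Formula} (h1 : Prov m n true (a.imp b)) (h2 : Prov m n true a) :
    Prov m n true b := Prov.mp h1 h2

lemma imp_trans {a b c : Formula} (h1 : Prov m n true (a.imp b))
    (h2 : Prov m n true (b.imp c)) : Prov m n true (a.imp c) := by
  have t : Tautology ((a.imp b).imp ((b.imp c).imp (a.imp c))) := by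
    intro v; simp only [Formula.imp, evalP]
    cases evalP v a <;> cases evalP v b <;> cases evalP v c <;> rfl
  exact t_mp (t_mp (Prov.taut t) h1) h2

lemma p_and_l (a c : Formula) : Prov m n true ((Formula.and a c).imp a) := by
  apply Prov.taut; intro v; simp only [Formula.imp, Formula.and, evalP]
  cases evalP v a <;> cases evalP v c <;> rfl

lemma p_and_r (a c : Formula) : Prov m n true ((Formula.and a c).imp c) := by
  apply Prov.taut; intro v; simp only [Formula.imp, Formula.and, evalP]
  cases evalP v a <;> cases evalP v c <;> rfl

lemma p_pair {d a c : Formula} (h1 : Prov m n true (d.imp a))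
    (h2 : Prov m n true (d.imp c)) : Prov m n true (d.imp (Formula.and a c)) := by
  have t : Tautology ((d.imp a).imp ((d.imp c).imp (d.imp (Formula.and a c)))) := by
    intro v; simp only [Formula.imp, Formula.and, evalP]
    cases evalP v d <;> cases evalP v a <;> cases evalP v c <;> rfl
  exact t_mp (t_mp (Prov.taut t) h1) h2

lemma p_nbot (d : Formula) : Prov m n true (d.imp (.neg .bot)) := by
  apply Prov.taut; intro v; simp only [Formula.imp, evalP]
  cases evalP v d <;> rfl

lemma p_absurd {a x : Formula} (h1 : Prov m n true a) (h2 : Prov m n true (.neg a)) :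
    Prov m n true x := by
  have t : Tautology (a.imp ((Formula.neg a).imp x)) := by
    intro v; simp only [Formula.imp, evalP]
    cases evalP v a <;> cases evalP v x <;> rfl
  exact t_mp (t_mp (Prov.taut t) h1) h2

lemma nec_iter (k : ℕ) {φ : Formula} (h : Prov m n true φ) :
    Prov m n true (boxn k φ) := by
  induction k with
  | zero => exact h
  | succ k ih => exact Prov.nec ih

lemma ros_succ {k : ℕ} (hk : 1 ≤ k) {φ : Formula}
    (h : Prov m n true (.neg (boxn k φ))) :
    Prov m n true (.neg (boxn (k+1) φ)) := by
  obtain ⟨k', rfl⟩ : ∃ k', k = k' + 1 := ⟨k - 1, by omega⟩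
  exact Prov.ros rfl h

lemma ros_iter {j k : ℕ} (hj : 1 ≤ j) (hjk : j ≤ k) {φ : Formula}
    (h : Prov m n true (.neg (boxn j φ))) :
    Prov m n true (.neg (boxn k φ)) := by
  obtain ⟨i, rfl⟩ : ∃ i, k = j + i := ⟨k - j, by omega⟩
  clear hjk
  induction i with
  | zero => exact h
  | succ i ih => exact ros_succ (k := j+i) (by omega) ih

/-! ### consistency of lists -/

def Incon (m n : ℕ) (L : List Formula) : Prop :=
  Prov m n true ((conjL L).imp .bot)

def Con (m n : ℕ) (L : List Formula) : Prop := ¬ Incon m n L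

lemma p_conj_mem {L : List Formula} {x : Formula} (hx : x ∈ L) :
    Prov m n true ((conjL L).imp x) := by
  induction L with
  | nil => simp at hx
  | cons a l ih =>
      rcases List.mem_cons.mp hx with rfl | hx
      · exact p_and_l _ _
      · exact imp_trans (p_and_r _ _) (ih hx)

lemma p_imp_conj {d : Formula} {L : List Formula}
    (h : ∀ x ∈ L, Prov m n true (d.imp x)) : Prov m n true (d.imp (conjL L)) := by
  induction L with
  | nil => exact p_nbot d
  | cons a l ih =>
      exact p_pair (h a (by simp)) (ih fun x hx => h x (by simp [hx]))

lemma p_conj_mono {L L' : List Formula} (h : ∀ x ∈ L, x ∈ L') :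
    Prov m n true ((conjL L').imp (conjL L)) :=
  p_imp_conj fun x hx => p_conj_mem (h x hx)

lemma incon_mono {L L' : List Formula} (h : Incon m n L) (hsub : ∀ x ∈ L, x ∈ L') :
    Incon m n L' := imp_trans (p_conj_mono hsub) h

lemma incon_of_neg {a : Formula} (h : Prov m n true (.neg a)) : Incon m n [a] := by
  have t : Tautology ((Formula.neg a).imp ((conjL [a]).imp .bot)) := by
    intro v; simp only [Formula.imp, Formula.and, conjL, evalP]
    cases evalP v a <;> rfl
  exact t_mp (Prov.taut t) h

lemma neg_of_incon {a : Formula} (h : Incon m n [a]) : Prov m n true (.neg a) := by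
  have t : Tautology (((conjL [a]).imp .bot).imp (.neg a)) := by
    intro v; simp only [Formula.imp, Formula.and, conjL, evalP]
    cases evalP v a <;> rfl
  exact t_mp (Prov.taut t) h

lemma prov_of_incon_negg {a : Formula} (h : Incon m n [Formula.negg a]) :
    Prov m n true a := by
  have t : Tautology (((conjL [Formula.negg a]).imp .bot).imp a) := by
    intro v; simp only [Formula.imp, Formula.and, conjL, evalP, evalP_negg]
    cases evalP v a <;> rfl
  exact t_mp (Prov.taut t) h

lemma con_negg_of_not_prov {a : Formula} (h : ¬ Prov m n true a) :
    Con m n [Formula.negg a] := fun hc => h (prov_of_incon_negg hc)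

end

/-! ### Lindenbaum extension -/

open Classical in
noncomputable def extendL (m n : ℕ) : List Formula → List Formula → List Formula
  | [], L => L
  | a :: rest, L =>
      extendL m n rest (if Con m n (a :: L) then a :: L else Formula.negg a :: L)

section
variable {m n : ℕ}

lemma extendL_keeps (rest : List Formula) (L : List Formula) :
    ∀ x ∈ L, x ∈ extendL m n rest L := by
  induction rest generalizing L with
  | nil => intro x hx; simpa [extendL] using hx
  | cons a r ih =>
      intro x hx
      simp only [extendL]
      split
      · exact ih _ x (by simp [hx])
      · exact ih _ x (by simp [hx])

lemma con_step {a : Formula} {L : List Formula} (h : Con m n L) :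
    Con m n (a :: L) ∨ Con m n (Formula.negg a :: L) := by
  by_contra hc
  push_neg at hc
  obtain ⟨h1, h2⟩ := hc
  rw [Con, not_not] at h1 h2
  apply h
  have t : Tautology (((conjL (a :: L)).imp .bot).imp
      (((conjL (Formula.negg a :: L)).imp .bot).imp ((conjL L).imp .bot))) := by
    intro v; simp only [Formula.imp, Formula.and, conjL, evalP, evalP_negg]
    cases evalP v a <;> cases evalP v (conjL L) <;> rfl
  exact t_mp (t_mp (Prov.taut t) h1) h2

lemma extendL_con (rest : List Formula) (L : List Formula) (h : Con m n L) :
    Con m n (extendL m n rest L) := by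
  induction rest generalizing L with
  | nil => simpa [extendL]
  | cons a r ih =>
      simp only [extendL]
      split
      · next hcon => exact ih _ hcon
      · next hncon =>
          rcases con_step (a := a) h with h1 | h2
          · exact absurd h1 hncon
          · exact ih _ h2

lemma extendL_mem_src {ψ : Formula} (rest : List Formula) (L : List Formula)
    (hrest : ∀ x ∈ rest, x ∈ ψ.sub) (hL : ∀ x ∈ L, x ∈ NSub ψ) :
    ∀ x ∈ extendL m n rest L, x ∈ NSub ψ := by
  induction rest generalizing L with
  | nil => simpa [extendL]
  | cons a r ih =>
      simp only [extendL]
      have ha : a ∈ ψ.sub := hrest a (by simp)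
      split
      · exact ih _ (fun x hx => hrest x (by simp [hx]))
          (by intro x hx
              rcases List.mem_cons.mp hx with rfl | hx
              · exact sub_subset_NSub ψ ha
              · exact hL x hx)
      · exact ih _ (fun x hx => hrest x (by simp [hx]))
          (by intro x hx
              rcases List.mem_cons.mp hx with rfl | hx
              · exact negg_mem_NSub ha
              · exact hL x hx)

lemma extendL_max (rest : List Formula) (L : List Formula) :
    ∀ a ∈ rest, a ∈ extendL m n rest L ∨ Formula.negg a ∈ extendL m n rest L := by
  induction rest generalizing L with
  | nil => simp
  | cons b r ih =>
      intro a ha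
      rcases List.mem_cons.mp ha with rfl | ha
      · simp only [extendL]
        split
        · left; exact extendL_keeps r _ a (by simp)
        · right; exact extendL_keeps r _ (Formula.negg a) (by simp)
      · simp only [extendL]
        split
        · exact ih _ a ha
        · exact ih _ a ha

/-! ### maximal consistent sets -/

def IsMCS (m n : ℕ) (ψ : Formula) (X : Finset Formula) : Prop :=
  (∀ x ∈ X, x ∈ NSub ψ) ∧ Con m n X.toList ∧
    ∀ α ∈ ψ.sub, α ∈ X ∨ Formula.negg α ∈ X

lemma lindenbaum {ψ : Formula} {L : List Formula} (hcon : Con m n L)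
    (hsub : ∀ x ∈ L, x ∈ NSub ψ) :
    ∃ X : Finset Formula, IsMCS m n ψ X ∧ ∀ x ∈ L, x ∈ X := by
  classical
  refine ⟨(extendL m n ψ.sub.toList L).toFinset, ⟨?_, ?_, ?_⟩, ?_⟩
  · intro x hx
    rw [List.mem_toFinset] at hx
    exact extendL_mem_src _ _ (fun y hy => by simpa using hy) hsub x hx
  · intro hic
    exact extendL_con ψ.sub.toList L hcon
      (incon_mono hic (by intro x hx; rw [← List.mem_toFinset]; simpa using hx))
  · intro α hα
    have := extendL_max (m := m) (n := n) ψ.sub.toList L α (by simpa using hα)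
    rcases this with h | h
    · left; simpa using h
    · right; simpa using h
  · intro x hx
    rw [List.mem_toFinset]
    exact extendL_keeps _ _ x hx

variable {ψ : Formula} {X : Finset Formula}

lemma mcs_con_sub (hX : IsMCS m n ψ X) {L : List Formula} (h : ∀ x ∈ L, x ∈ X) :
    Con m n L := fun hic => hX.2.1 (incon_mono hic (by simpa [Finset.mem_toList] using h))

lemma mcs_not_both (hX : IsMCS m n ψ X) {α : Formula} (h1 : α ∈ X)
    (h2 : Formula.negg α ∈ X) : False := by
  apply mcs_con_sub hX (L := [α, Formula.negg α]) (by simp [h1, h2])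
  have t : Tautology ((conjL [α, Formula.negg α]).imp .bot) := by
    intro v; simp only [Formula.imp, Formula.and, conjL, evalP, evalP_negg]
    cases evalP v α <;> rfl
  exact Prov.taut t

lemma mcs_bot_notmem (hX : IsMCS m n ψ X) : (Formula.bot) ∉ X := by
  intro hb
  apply mcs_con_sub hX (L := [Formula.bot]) (by simp [hb])
  have t : Tautology ((conjL [Formula.bot]).imp .bot) := by
    intro v; simp only [Formula.imp, Formula.and, conjL, evalP]; rfl
  exact Prov.taut t

lemma mcs_thm (hX : IsMCS m n ψ X) {α : Formula} (hp : Prov m n true α)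
    (hs : α ∈ ψ.sub) : α ∈ X := by
  rcases hX.2.2 α hs with h | h
  · exact h
  · exfalso
    apply mcs_con_sub hX (L := [Formula.negg α]) (by simp [h])
    have t : Tautology (α.imp ((conjL [Formula.negg α]).imp .bot)) := by
      intro v; simp only [Formula.imp, Formula.and, conjL, evalP, evalP_negg]
      cases evalP v α <;> rfl
    exact t_mp (Prov.taut t) hp

lemma mcs_imp_closed (hX : IsMCS m n ψ X) {α β : Formula}
    (hp : Prov m n true (α.imp β)) (hα : α ∈ X) (hβ : β ∈ ψ.sub) : β ∈ X := by
  rcases hX.2.2 β hβ with h | h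
  · exact h
  · exfalso
    apply mcs_con_sub hX (L := [α, Formula.negg β]) (by simp [hα, h])
    have t : Tautology ((α.imp β).imp ((conjL [α, Formula.negg β]).imp .bot)) := by
      intro v; simp only [Formula.imp, Formula.and, conjL, evalP, evalP_negg]
      cases evalP v α <;> cases evalP v β <;> rfl
    exact t_mp (Prov.taut t) hp

lemma mcs_notmem_of_neg_thm (hX : IsMCS m n ψ X) {α : Formula}
    (hp : Prov m n true (.neg α)) : α ∉ X := by
  intro hα
  apply mcs_con_sub hX (L := [α]) (by simp [hα])
  exact incon_of_neg hp

lemma mcs_not_with_neg (hX : IsMCS m n ψ X) {α : Formula} (h1 : α ∈ X)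
    (h2 : Formula.neg α ∈ X) : False := by
  apply mcs_con_sub hX (L := [α, Formula.neg α]) (by simp [h1, h2])
  have t : Tautology ((conjL [α, Formula.neg α]).imp .bot) := by
    intro v; simp only [Formula.imp, Formula.and, conjL, evalP]
    cases evalP v α <;> rfl
  exact Prov.taut t

lemma mcs_neg_iff (hX : IsMCS m n ψ X) {α : Formula} (hs : Formula.neg α ∈ ψ.sub) :
    Formula.neg α ∈ X ↔ α ∉ X := by
  constructor
  · intro h1 h2
    exact mcs_not_with_neg hX h2 h1
  · intro h
    rcases hX.2.2 _ hs with h1 | h1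
    · exact h1
    · exact absurd (show α ∈ X by simpa using h1) h

lemma mcs_or_iff (hX : IsMCS m n ψ X) {α β : Formula} (hs : Formula.or α β ∈ ψ.sub) :
    Formula.or α β ∈ X ↔ (α ∈ X ∨ β ∈ X) := by
  have hsα : α ∈ ψ.sub := sub_subset_of_mem hs (by simp [Formula.sub, mem_sub_self])
  have hsβ : β ∈ ψ.sub := sub_subset_of_mem hs (by simp [Formula.sub, mem_sub_self])
  constructor
  · intro h
    by_contra hc
    push_neg at hc
    obtain ⟨h1, h2⟩ := hc
    rcases hX.2.2 α hsα with hα | hα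
    · exact h1 hα
    rcases hX.2.2 β hsβ with hβ | hβ
    · exact h2 hβ
    apply mcs_con_sub hX (L := [Formula.or α β, Formula.negg α, Formula.negg β])
      (by simp [h, hα, hβ])
    have t : Tautology ((conjL [Formula.or α β, Formula.negg α, Formula.negg β]).imp .bot) := by
      intro v; simp only [Formula.imp, Formula.and, conjL, evalP, evalP_negg]
      cases evalP v α <;> cases evalP v β <;> rfl
    exact Prov.taut t
  · intro h
    rcases h with h | h
    · refine mcs_imp_closed hX ?_ h hs
      apply Prov.taut; intro v; simp only [Formula.imp, evalP]
      cases evalP v α <;> cases evalP v β <;> rfl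
    · refine mcs_imp_closed hX ?_ h hs
      apply Prov.taut; intro v; simp only [Formula.imp, evalP]
      cases evalP v α <;> cases evalP v β <;> rfl

lemma mcs_box_mem_sub (hX : IsMCS m n ψ X) {α : Formula}
    (h : Formula.box α ∈ X) : Formula.box α ∈ ψ.sub :=
  box_mem_sub_of_mem_NSub (hX.1 _ h)

lemma mcs_not_prov_of_notmem (hX : IsMCS m n ψ X) {α : Formula}
    (hs : α ∈ ψ.sub) (h : α ∉ X) : ¬ Prov m n true α :=
  fun hp => h (mcs_thm hX hp hs)

end

end NRA
namespace NRA
open Formula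

lemma fsize_pos (χ : Formula) : 1 ≤ fsize χ := by
  cases χ <;> simp [fsize]

structure GoodModel (m n : ℕ) (ψ : Formula) (W : Type) where
  M : NModel W
  mcs : W → Finset Formula
  label : W → Finset Formula
  hmcs : ∀ w, IsMCS m n ψ (mcs w)
  hlabel_sub : ∀ w, label w ⊆ ψ.sub
  hlabel_closed : ∀ w, ∀ α ∈ label w, α.sub ⊆ label w
  hV : ∀ w p, M.V w p ↔ Formula.var p ∈ mcs w
  hC1 : ∀ α w w', Formula.box α ∈ label w → Formula.box α ∈ mcs w →
     M.Rel α w w' → α ∈ label w' ∧ α ∈ mcs w'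
  hC2 : ∀ α w, Formula.box α ∈ label w → Formula.box α ∉ mcs w →
     (∀ χ' w', fsize χ' ≤ fsize α → χ' ∈ label w' → (Sat M w' χ' ↔ χ' ∈ mcs w')) →
     ∃ w', M.Rel α w w' ∧ ¬ Sat M w' α

theorem good_truth {m n : ℕ} {ψ : Formula} {W : Type} (G : GoodModel m n ψ W) :
    ∀ χ w, χ ∈ G.label w → (Sat G.M w χ ↔ χ ∈ G.mcs w) := by
  suffices H : ∀ s χ w, fsize χ ≤ s → χ ∈ G.label w → (Sat G.M w χ ↔ χ ∈ G.mcs w) by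
    exact fun χ w h => H (fsize χ) χ w le_rfl h
  intro s
  induction s with
  | zero => intro χ w hs _; exact absurd (le_trans (fsize_pos χ) hs) (by omega)
  | succ s ih =>
      intro χ w hs hl
      have hsub : χ ∈ ψ.sub := G.hlabel_sub w hl
      cases χ with
      | bot =>
          simp only [Sat]
          exact ⟨fun h => h.elim, fun h => mcs_bot_notmem (G.hmcs w) h⟩
      | var p =>
          simp only [Sat]
          exact G.hV w p
      | neg α =>
          have hαl : α ∈ G.label w :=
            G.hlabel_closed w _ hl (by simp [Formula.sub, mem_sub_self])
          have hα : Sat G.M w α ↔ α ∈ G.mcs w :=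
            ih α w (by simp [fsize] at hs ⊢; omega) hαl
          simp only [Sat]
          rw [hα, mcs_neg_iff (G.hmcs w) hsub]
      | or α β =>
          have hαl : α ∈ G.label w :=
            G.hlabel_closed w _ hl (by simp [Formula.sub, mem_sub_self])
          have hβl : β ∈ G.label w :=
            G.hlabel_closed w _ hl (by simp [Formula.sub, mem_sub_self])
          have hα : Sat G.M w α ↔ α ∈ G.mcs w :=
            ih α w (by simp [fsize] at hs ⊢; omega) hαl
          have hβ : Sat G.M w β ↔ β ∈ G.mcs w :=
            ih β w (by simp [fsize] at hs ⊢; omega) hβl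
          simp only [Sat]
          rw [hα, hβ, mcs_or_iff (G.hmcs w) hsub]
      | box α =>
          have hsα : fsize α ≤ s := by simp [fsize] at hs; omega
          constructor
          · intro hSat
            by_contra hnot
            obtain ⟨w', hR, hnS⟩ := G.hC2 α w hl hnot
              (fun χ' w' h1 h2 => ih χ' w' (le_trans h1 hsα) h2)
            exact hnS (hSat w' hR)
          · intro hmem w' hR
            obtain ⟨h1, h2⟩ := G.hC1 α w w' hl hmem hR
            exact (ih α w' hsα h1).mpr h2

end NRA
namespace NRA
open Formula

section Canonical
variable (m n : ℕ) (ψ : Formula)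

open Classical in
noncomputable def Worlds : Finset (Finset Formula) :=
  (NSub ψ).powerset.filter (IsMCS m n ψ)

def CanW : Type := {X : Finset Formula // X ∈ Worlds m n ψ}

noncomputable instance : Fintype (CanW m n ψ) := by
  unfold CanW; infer_instance

variable {m n ψ}

lemma canW_mcs (X : CanW m n ψ) : IsMCS m n ψ X.1 := by
  have := X.2
  simp only [Worlds, Finset.mem_filter] at this
  exact this.2

lemma canW_of_mcs {X : Finset Formula} (h : IsMCS m n ψ X) : X ∈ Worlds m n ψ := by
  simp only [Worlds, Finset.mem_filter, Finset.mem_powerset]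
  exact ⟨fun x hx => h.1 x hx, h⟩

variable (m n ψ)

def CanR : NFrame (CanW m n ψ) := fun χ X Y => Formula.box χ ∈ X.1 → χ ∈ Y.1

noncomputable def CanM : NModel (CanW m n ψ) :=
  ⟨CanR m n ψ, fun X p => Formula.var p ∈ X.1⟩

variable {m n ψ}

/-- F1: chase a path -/
lemma canR_chase {φ : Formula} :
    ∀ (k : ℕ) (X Y : CanW m n ψ), FPath (CanR m n ψ) φ k X Y →
      boxn k φ ∈ X.1 → φ ∈ Y.1 := by
  intro k
  induction k with
  | zero => intro X Y h hb; cases h; exact hb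
  | succ k ih =>
      intro X Y h hb
      obtain ⟨Wd, hR, hp⟩ := h
      exact ih Wd Y hp (hR hb)

lemma exists_root (hψ : ¬ Prov m n true ψ) : ∃ X : CanW m n ψ, Formula.negg ψ ∈ X.1 := by
  obtain ⟨X, hX, hmem⟩ := lindenbaum (ψ := ψ) (con_negg_of_not_prov hψ)
    (by intro x hx
        simp at hx; subst hx
        exact negg_mem_NSub (mem_sub_self ψ))
  exact ⟨⟨X, canW_of_mcs hX⟩, hmem (Formula.negg ψ) (by simp)⟩

lemma world_lacking {φ : Formula} {j : ℕ} (hj : 1 ≤ j) (Z : CanW m n ψ)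
    (h : ¬ (boxn j φ ∈ ψ.sub ∧ Prov m n true (boxn j φ))) :
    ∃ Wd : CanW m n ψ, boxn j φ ∉ Wd.1 := by
  obtain ⟨j', rfl⟩ : ∃ j', j = j' + 1 := ⟨j - 1, by omega⟩
  by_cases hsub : boxn (j'+1) φ ∈ ψ.sub
  · have hnp : ¬ Prov m n true (boxn (j'+1) φ) := fun hp => h ⟨hsub, hp⟩
    obtain ⟨X, hX, hmem⟩ := lindenbaum (ψ := ψ) (con_negg_of_not_prov hnp)
      (by intro x hx; simp at hx; subst hx; exact negg_mem_NSub hsub)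
    refine ⟨⟨X, canW_of_mcs hX⟩, fun hc => ?_⟩
    exact mcs_not_both hX hc (hmem _ (by simp))
  · refine ⟨Z, fun hc => hsub ?_⟩
    have := (canW_mcs Z).1 _ hc
    exact box_mem_sub_of_mem_NSub (by simpa using this)

lemma world_containing {φ : Formula} {j : ℕ} (hsub : boxn j φ ∈ ψ.sub)
    (hcon : Con m n [boxn j φ]) :
    ∃ Wd : CanW m n ψ, boxn j φ ∈ Wd.1 := by
  obtain ⟨X, hX, hmem⟩ := lindenbaum (ψ := ψ) hcon
    (by intro x hx; simp at hx; subst hx; exact sub_subset_NSub ψ hsub)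
  exact ⟨⟨X, canW_of_mcs hX⟩, hmem _ (by simp)⟩

/-- threshold path construction -/
lemma build_path {φ : Formula} :
    ∀ (k : ℕ) (s : ℕ) (X Y : CanW m n ψ), 1 ≤ k → s ≤ k →
    (1 ≤ s → boxn k φ ∉ X.1) →
    (∀ j, 1 ≤ j → j ≤ k-1 → k-s ≤ j → ∃ Wd : CanW m n ψ, boxn j φ ∉ Wd.1) →
    (∀ j, 1 ≤ j → j ≤ k-1 → j < k-s → ∃ Wd : CanW m n ψ, boxn j φ ∈ Wd.1) →
    (s ≤ k-2 → φ ∈ Y.1) →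
    FPath (CanR m n ψ) φ k X Y := by
  intro k
  induction k with
  | zero => intro s X Y hk; omega
  | succ k ih =>
      intro s X Y _ hsk hi hlack hcont hY
      rcases Nat.eq_zero_or_pos k with rfl | hk
      · -- k+1 = 1 : single edge
        refine ⟨Y, ?_, rfl⟩
        intro hbox
        rcases Nat.eq_zero_or_pos s with rfl | hs
        · exact hY (by omega)
        · exact absurd hbox (hi hs)
      · rcases Nat.eq_zero_or_pos s with rfl | hs
        · -- all-contain path
          obtain ⟨v, hv⟩ := hcont k (by omega) (by omega) (by omega)
          refine ⟨v, fun _ => hv, ?_⟩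
          apply ih 0 v Y hk (by omega) (by omega)
          · intro j h1 h2 h3; omega
          · intro j h1 h2 h3
            exact hcont j h1 (by omega) (by omega)
          · intro _; exact hY (by omega)
        · -- first step to a lacking world
          obtain ⟨v, hv⟩ := hlack k (by omega) (by omega) (by omega)
          refine ⟨v, fun hbox => absurd hbox (hi hs), ?_⟩
          rcases Nat.lt_or_ge k 2 with hk2 | hk2
          · -- k = 1 : single final edge from v
            have hk1 : k = 1 := by omega
            subst hk1
            exact ⟨Y, fun hb => absurd hb hv, rfl⟩
          · apply ih (s-1) v Y hk (by omega) (fun _ => hv)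
            · intro j h1 h2 h3
              exact hlack j h1 (by omega) (by omega)
            · intro j h1 h2 h3
              exact hcont j h1 (by omega) (by omega)
            · intro h
              have hgoal : s ≤ k + 1 - 2 := by omega
              exact hY hgoal

open Classical in
lemma can_subacc (hψ : ¬ Prov m n true ψ) (hn : 1 ≤ n) :
    SubAcc (CanR m n ψ) m n ψ.sub := by
  intro φ hφm X Y hpath
  have hφsub : φ ∈ ψ.sub := mem_sub_of_boxn_le (Nat.zero_le m) hφm
  -- derive φ ∈ Y given boxn n φ provable-or-in-X
  have chase : boxn m φ ∈ X.1 → φ ∈ Y.1 := fun h => canR_chase m X Y hpath h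
  by_cases hnX : boxn n φ ∈ X.1
  · -- Case A
    have hnsub : boxn n φ ∈ ψ.sub := by
      obtain ⟨n', rfl⟩ : ∃ n', n = n' + 1 := ⟨n - 1, by omega⟩
      exact box_mem_sub_of_mem_NSub (by simpa using (canW_mcs X).1 _ hnX)
    have hφY : φ ∈ Y.1 := chase (mcs_imp_closed (canW_mcs X) (Prov.axA φ) hnX hφm)
    apply build_path n 0 X Y hn (by omega)
    · intro hc; exact absurd hc (by omega)
    · intro j h1 h2 h3; omega
    · intro j h1 h2 _
      apply world_containing (mem_sub_of_boxn_le (by omega) hnsub)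
      intro hic
      have hneg : Prov m n true (.neg (boxn n φ)) := ros_iter h1 (by omega) (neg_of_incon hic)
      exact mcs_notmem_of_neg_thm (canW_mcs X) hneg hnX
    · intro _; exact hφY
  · by_cases hS : ∃ j, (1 ≤ j ∧ boxn j φ ∈ ψ.sub ∧ Prov m n true (boxn j φ)) ∧ j ≤ n-1
    · -- Case C
      set P : ℕ → Prop := fun j => 1 ≤ j ∧ boxn j φ ∈ ψ.sub ∧ Prov m n true (boxn j φ)
        with hP
      obtain ⟨j₀, hj₀, hj₀le⟩ := hS
      set Mb := Nat.findGreatest P (n-1) with hMb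
      have hPM : P Mb := Nat.findGreatest_spec (m := j₀) hj₀le hj₀
      have hMle : Mb ≤ n - 1 := Nat.findGreatest_le _
      have hM1 : 1 ≤ Mb := hPM.1
      have hprovn : Prov m n true (boxn n φ) := by
        have := nec_iter (m := m) (n := n) (n - Mb) hPM.2.2
        rw [← boxn_add] at this
        have heq : n - Mb + Mb = n := by omega
        rwa [heq] at this
      have hφY : φ ∈ Y.1 := by
        apply chase
        exact mcs_thm (canW_mcs X) (t_mp (Prov.axA φ) hprovn) hφm
      apply build_path n (n - 1 - Mb) X Y hn (by omega)
      · intro _; exact hnX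
      · intro j h1 h2 h3
        apply world_lacking h1 X
        intro ⟨hc1, hc2⟩
        exact Nat.findGreatest_is_greatest (P := P) (n := n-1) (by omega) (by omega)
          ⟨h1, hc1, hc2⟩
      · intro j h1 h2 h3
        apply world_containing (mem_sub_of_boxn_le (show j ≤ Mb by omega) hPM.2.1)
        intro hic
        have hneg : Prov m n true (.neg (boxn Mb φ)) :=
          ros_iter h1 (by omega) (neg_of_incon hic)
        exact hψ (p_absurd hPM.2.2 hneg)
      · intro _; exact hφY
    · -- Case B
      apply build_path n n X Y hn le_rfl (fun _ => hnX)
      · intro j h1 h2 _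
        apply world_lacking h1 X
        intro hc
        exact hS ⟨j, ⟨h1, hc.1, hc.2⟩, h2⟩
      · intro j h1 h2 h3; exact absurd h3 (by omega)
      · intro hc; exact absurd hc (by omega)

end Canonical
end NRA
namespace NRA
open Formula

noncomputable def can_good (m n : ℕ) (ψ : Formula) (hψ : ¬ Prov m n true ψ) :
    GoodModel m n ψ (CanW m n ψ) where
  M := ⟨CanR m n ψ, fun X p => Formula.var p ∈ X.1⟩
  mcs := fun X => X.1
  label := fun _ => ψ.sub
  hmcs := canW_mcs
  hlabel_sub := fun _ => Finset.Subset.refl _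
  hlabel_closed := fun _ α hα => sub_subset_of_mem hα
  hV := fun _ _ => Iff.rfl
  hC1 := by
    intro α X Y hl hm hR
    exact ⟨sub_subset_of_mem hl (by simp [Formula.sub, mem_sub_self]), hR hm⟩
  hC2 := by
    intro α X hl hnm IH
    have hαsub : α ∈ ψ.sub := sub_subset_of_mem hl (by simp [Formula.sub, mem_sub_self])
    have hnp : ¬ Prov m n true (Formula.box α) :=
      mcs_not_prov_of_notmem (canW_mcs X) hl hnm
    have hnpα : ¬ Prov m n true α := fun h => hnp (Prov.nec h)
    obtain ⟨Y, hY, hmem⟩ := lindenbaum (ψ := ψ) (con_negg_of_not_prov hnpα)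
      (by intro x hx; simp at hx; subst hx; exact negg_mem_NSub hαsub)
    refine ⟨⟨Y, canW_of_mcs hY⟩, fun hb => absurd hb hnm, ?_⟩
    exact fun hS => mcs_not_both hY ((IH α ⟨Y, canW_of_mcs hY⟩ le_rfl hαsub).mp hS)
      (hmem _ (by simp))

lemma canonical_refute (m n : ℕ) (ψ : Formula)
    (h : ∀ (W : Type) [Fintype W] [Nonempty W] (R : NFrame W),
      SubAcc R m n ψ.sub → ValidF R ψ)
    (hψ : ¬ Prov m n true ψ)
    (hacc : SubAcc (CanR m n ψ) m n ψ.sub) : False := by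
  obtain ⟨root, hroot⟩ := exists_root hψ
  have hne : Nonempty (CanW m n ψ) := ⟨root⟩
  have hval := h (CanW m n ψ) (CanR m n ψ) hacc (fun X p => Formula.var p ∈ X.1) root
  have hmem := (good_truth (can_good m n ψ hψ) ψ root (mem_sub_self ψ)).mp hval
  exact mcs_not_both (canW_mcs root) hmem hroot

end NRA
namespace NRA
open Formula

/-! ### The cycle (trace) model for the case n = 0, m ≥ 1 -/

/-- bounded-length traces -/
def TS (m : ℕ) (ψ : Formula) : ℕ → Finset (List (Formula × ℕ))
  | 0 => {[]}
  | d+1 => {[]} ∪ (ψ.sub ×ˢ Finset.range m).biUnion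
      (fun e => (TS m ψ d).image (fun l => e :: l))

def TrW (m : ℕ) (ψ : Formula) : Type :=
  {σ : List (Formula × ℕ) // σ ∈ TS m ψ (fsize ψ)}

noncomputable instance (m : ℕ) (ψ : Formula) : Fintype (TrW m ψ) := by
  unfold TrW; infer_instance

/-- the formula whose subformulas must be evaluated correctly at a trace -/
def lab (ψ : Formula) : List (Formula × ℕ) → Formula
  | [] => ψ
  | e :: _ => e.1

open Classical in
noncomputable def rootW (m : ℕ) (ψ : Formula) : Finset Formula :=
  if h : ∃ X, IsMCS m 0 ψ X ∧ Formula.negg ψ ∈ X then h.choose else ∅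

open Classical in
noncomputable def Zw (m : ℕ) (ψ : Formula) (φ₀ : Formula) : Finset Formula :=
  if h : ∃ X, IsMCS m 0 ψ X ∧ Formula.negg φ₀ ∈ X then h.choose else rootW m ψ

noncomputable def mcsT (m : ℕ) (ψ : Formula) : List (Formula × ℕ) → Finset Formula
  | [] => rootW m ψ
  | e :: _ => Zw m ψ e.1

/-- a trigger at trace σ : a missing boxed formula with base φ₀ -/
def TRIG (m : ℕ) (ψ : Formula) (σ : List (Formula × ℕ)) (φ₀ : Formula) (ℓ : ℕ) : Prop :=
  boxn (ℓ+1) φ₀ ∈ (lab ψ σ).sub ∧ boxn (ℓ+1) φ₀ ∉ mcsT m ψ σ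

def ValidT (m : ℕ) (ψ : Formula) : List (Formula × ℕ) → Prop
  | [] => True
  | (φ₀, i) :: σ => ValidT m ψ σ ∧ 1 ≤ i ∧ i < m ∧ φ₀ ∈ ψ.sub ∧
      ¬ Prov m 0 true φ₀ ∧ ∃ ℓ, TRIG m ψ σ φ₀ ℓ

/-- position `p` on the cycle spawned at σ for base φ₀ -/
def posT (m : ℕ) (σ : List (Formula × ℕ)) (φ₀ : Formula) (p : ℕ) :
    List (Formula × ℕ) :=
  if p % m = 0 then σ else (φ₀, p % m) :: σ

def TrRel (m : ℕ) (ψ : Formula) (χ : Formula) (a b : List (Formula × ℕ)) : Prop :=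
  ∃ σ i, i < m ∧ a = posT m σ (core χ) i ∧ b = posT m σ (core χ) (i+1) ∧
    ∃ t, TRIG m ψ σ (core χ) (deg χ + i + t * m)

def TrR (m : ℕ) (ψ : Formula) : NFrame (TrW m ψ) := fun χ a b => TrRel m ψ χ a.1 b.1

section TraceLemmas
variable {m : ℕ} {ψ : Formula}

lemma posT_congr {σ : List (Formula × ℕ)} {B : Formula} {p q : ℕ}
    (h : p % m = q % m) : posT m σ B p = posT m σ B q := by
  simp only [posT, h]

lemma posT_mod (σ : List (Formula × ℕ)) (B : Formula) (p : ℕ) :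
    posT m σ B p = posT m σ B (p % m) :=
  posT_congr (Nat.mod_mod_of_dvd p dvd_rfl).symm

lemma posT_add_m (σ : List (Formula × ℕ)) (B : Formula) (p : ℕ) :
    posT m σ B (p + m) = posT m σ B p :=
  posT_congr (Nat.add_mod_right p m)

lemma TRIG_head {σ : List (Formula × ℕ)} {B : Formula} {ℓ : ℕ}
    (h : TRIG m ψ σ B ℓ) : ∀ (i : ℕ) (σ' : List (Formula × ℕ)), σ ≠ (B, i) :: σ' := by
  rintro i σ' rfl
  have := fsize_le_of_mem_sub h.1
  rw [fsize_boxn] at this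
  simp only [lab] at this
  omega

/-- decompositions of a world as a cycle position are compatible -/
lemma pos_unique {σ σ' : List (Formula × ℕ)} {B : Formula} {i i' : ℕ}
    (hσ : ∃ ℓ, TRIG m ψ σ B ℓ) (hσ' : ∃ ℓ, TRIG m ψ σ' B ℓ)
    (h : posT m σ B i = posT m σ' B i') :
    σ = σ' ∧ i % m = i' % m := by
  obtain ⟨ℓ, hT⟩ := hσ
  obtain ⟨ℓ', hT'⟩ := hσ'
  by_cases h1 : i % m = 0 <;> by_cases h2 : i' % m = 0
  · rw [posT, if_pos h1, posT, if_pos h2] at h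
    exact ⟨h, by omega⟩
  · rw [posT, if_pos h1, posT, if_neg h2] at h
    exact absurd h (TRIG_head hT _ _)
  · rw [posT, if_neg h1, posT, if_pos h2] at h
    exact absurd h.symm (TRIG_head hT' _ _)
  · rw [posT, if_neg h1, posT, if_neg h2] at h
    obtain ⟨he, hl⟩ := List.cons_eq_cons.mp h
    exact ⟨hl, (Prod.ext_iff.mp he).2⟩

lemma path_pos {φ : Formula} :
    ∀ (k : ℕ) (x y : TrW m ψ) (σ : List (Formula × ℕ)) (i : ℕ),
    (∃ ℓ, TRIG m ψ σ (core φ) ℓ) → x.1 = posT m σ (core φ) i →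
    FPath (TrR m ψ) φ k x y → y.1 = posT m σ (core φ) (i + k) := by
  intro k
  induction k with
  | zero => intro x y σ i _ hx hp; cases hp; simpa using hx
  | succ k ih =>
      intro x y σ i hσ hx hp
      obtain ⟨wd, hR, hp'⟩ := hp
      have hR' : TrRel m ψ (boxn k φ) x.1 wd.1 := hR
      obtain ⟨σ', i', hi', hx', hwd', ht'⟩ := hR'
      rw [core_boxn] at hx' hwd' ht'
      have hσ' : ∃ ℓ, TRIG m ψ σ' (core φ) ℓ := by
        obtain ⟨t, ht⟩ := ht'; exact ⟨_, ht⟩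
      obtain ⟨rfl, hmod⟩ := pos_unique hσ hσ' (hx.symm.trans hx')
      have hwd : wd.1 = posT m σ (core φ) (i+1) := by
        rw [hwd']
        exact posT_congr ((Nat.ModEq.add_right 1 hmod.symm))
      have := ih wd y σ (i+1) hσ hwd hp'
      rw [show i + 1 + k = i + (k+1) from by omega] at this
      exact this

end TraceLemmas
end NRA
namespace NRA
open Formula

section TraceLemmas2
variable {m : ℕ} {ψ : Formula}

lemma tr_subacc (hm : 1 ≤ m) : SubAcc (TrR m ψ) m 0 ψ.sub := by
  intro φ _ x y hp
  obtain ⟨m', hm'⟩ : ∃ m', m = m' + 1 := ⟨m - 1, by omega⟩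
  subst hm'
  have hp2 := hp
  obtain ⟨wd, hR, -⟩ := hp2
  have hR' : TrRel (m'+1) ψ (boxn m' φ) x.1 wd.1 := hR
  obtain ⟨σ, i, hi, hx, -, ht⟩ := hR'
  rw [core_boxn] at hx ht
  have hσ : ∃ ℓ, TRIG (m'+1) ψ σ (core φ) ℓ := by
    obtain ⟨t, ht⟩ := ht; exact ⟨_, ht⟩
  have hy := path_pos (m'+1) x y σ i hσ hx hp
  have hxy : y.1 = x.1 := by
    rw [hy, hx]
    exact posT_congr (Nat.add_mod_right i (m'+1))
  exact (Subtype.ext hxy).symm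

lemma lab_mem_sub {σ : List (Formula × ℕ)} (hv : ValidT m ψ σ) : lab ψ σ ∈ ψ.sub := by
  cases σ with
  | nil => exact mem_sub_self ψ
  | cons e σ' =>
      obtain ⟨φ₀, i⟩ := e
      exact hv.2.2.2.1

lemma valid_bound {σ : List (Formula × ℕ)} (hv : ValidT m ψ σ) :
    σ.length + fsize (lab ψ σ) ≤ fsize ψ := by
  induction σ with
  | nil => simp [lab]
  | cons e σ' ih =>
      obtain ⟨φ₀, i⟩ := e
      obtain ⟨hv', -, -, -, -, ℓ, h1, -⟩ := hv
      have hb := fsize_le_of_mem_sub h1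
      rw [fsize_boxn] at hb
      have := ih hv'
      simp only [lab, List.length_cons]
      omega

lemma valid_entries {σ : List (Formula × ℕ)} (hv : ValidT m ψ σ) :
    ∀ e ∈ σ, e.1 ∈ ψ.sub ∧ e.2 < m := by
  induction σ with
  | nil => simp
  | cons e σ' ih =>
      obtain ⟨φ₀, i⟩ := e
      obtain ⟨hv', h1, h2, h3, -⟩ := hv
      intro e' he'
      rcases List.mem_cons.mp he' with rfl | he'
      · exact ⟨h3, h2⟩
      · exact ih hv' e' he'

lemma mem_TS_of {σ : List (Formula × ℕ)} :
    ∀ d, σ.length ≤ d → (∀ e ∈ σ, e.1 ∈ ψ.sub ∧ e.2 < m) → σ ∈ TS m ψ d := by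
  induction σ with
  | nil =>
      intro d _ _
      cases d with
      | zero => simp [TS]
      | succ d => simp [TS]
  | cons e σ' ih =>
      intro d hlen he
      cases d with
      | zero => simp at hlen
      | succ d =>
          simp only [TS, Finset.mem_union, Finset.mem_biUnion, Finset.mem_image]
          right
          refine ⟨e, ?_, σ', ih d (by simpa using hlen)
            (fun x hx => he x (by simp [hx])), rfl⟩
          have := he e (by simp)
          simp only [Finset.mem_product, Finset.mem_range]
          exact ⟨this.1, this.2⟩

lemma valid_mem {σ : List (Formula × ℕ)} (hv : ValidT m ψ σ) : σ ∈ TS m ψ (fsize ψ) := by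
  apply mem_TS_of (fsize ψ) _ (valid_entries hv)
  have := valid_bound hv
  have := fsize_pos (lab ψ σ)
  omega

lemma rootW_spec (hψ : ¬ Prov m 0 true ψ) :
    IsMCS m 0 ψ (rootW m ψ) ∧ Formula.negg ψ ∈ rootW m ψ := by
  have hex : ∃ X, IsMCS m 0 ψ X ∧ Formula.negg ψ ∈ X := by
    obtain ⟨X, hX, hmem⟩ := lindenbaum (ψ := ψ) (con_negg_of_not_prov hψ)
      (by intro x hx; simp at hx; subst hx; exact negg_mem_NSub (mem_sub_self ψ))
    exact ⟨X, hX, hmem _ (by simp)⟩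
  rw [rootW, dif_pos hex]
  exact hex.choose_spec

lemma Zw_spec (hψ : ¬ Prov m 0 true ψ) {φ₀ : Formula} (h1 : φ₀ ∈ ψ.sub)
    (h2 : ¬ Prov m 0 true φ₀) :
    IsMCS m 0 ψ (Zw m ψ φ₀) ∧ Formula.negg φ₀ ∈ Zw m ψ φ₀ := by
  have hex : ∃ X, IsMCS m 0 ψ X ∧ Formula.negg φ₀ ∈ X := by
    obtain ⟨X, hX, hmem⟩ := lindenbaum (ψ := ψ) (con_negg_of_not_prov h2)
      (by intro x hx; simp at hx; subst hx; exact negg_mem_NSub h1)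
    exact ⟨X, hX, hmem _ (by simp)⟩
  rw [Zw, dif_pos hex]
  exact hex.choose_spec

lemma Zw_mcs (hψ : ¬ Prov m 0 true ψ) (φ₀ : Formula) : IsMCS m 0 ψ (Zw m ψ φ₀) := by
  rw [Zw]
  split
  · next hex => exact hex.choose_spec.1
  · exact (rootW_spec hψ).1

lemma mcsT_mcs (hψ : ¬ Prov m 0 true ψ) (σ : List (Formula × ℕ)) :
    IsMCS m 0 ψ (mcsT m ψ σ) := by
  cases σ with
  | nil => exact (rootW_spec hψ).1
  | cons e σ' => exact Zw_mcs hψ e.1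

lemma ax0_mult (t : ℕ) (φ : Formula) : Prov m 0 true (φ.imp (boxn (t*m) φ)) := by
  induction t with
  | zero =>
      apply Prov.taut; intro v; simp only [Nat.zero_mul, boxn_zero, Formula.imp, evalP]
      cases evalP v φ <;> rfl
  | succ t ih =>
      have h2 : Prov m 0 true ((boxn (t*m) φ).imp (boxn m (boxn (t*m) φ))) :=
        Prov.axA (boxn (t*m) φ)
      rw [show (t+1)*m = m + t*m from by ring, boxn_add]
      exact imp_trans ih h2

lemma ax0_le {j k : ℕ} {φ : Formula} (h : j ≤ k) (hmod : j % m = k % m) :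
    Prov m 0 true ((boxn j φ).imp (boxn k φ)) := by
  obtain ⟨t, ht⟩ := (Nat.modEq_iff_dvd' h).mp hmod
  rw [show k = t*m + j from by rw [Nat.mul_comm t m]; omega, boxn_add]
  exact ax0_mult t (boxn j φ)

end TraceLemmas2
end NRA
namespace NRA
open Formula

lemma fsize_eq_deg_core (α : Formula) : fsize α = deg α + fsize (core α) := by
  conv_lhs => rw [← boxn_core_deg α]
  rw [fsize_boxn]

lemma box_eq_boxn_succ (α : Formula) :
    Formula.box α = boxn (deg α + 1) (core α) := by
  rw [boxn_succ, boxn_core_deg]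

open Classical in
noncomputable def tr_good (m : ℕ) (ψ : Formula) (hm : 1 ≤ m)
    (hψ : ¬ Prov m 0 true ψ) : GoodModel m 0 ψ (TrW m ψ) where
  M := ⟨TrR m ψ, fun w p => Formula.var p ∈ mcsT m ψ w.1⟩
  mcs := fun w => mcsT m ψ w.1
  label := fun w => if ValidT m ψ w.1 then (lab ψ w.1).sub else ∅
  hmcs := fun w => mcsT_mcs hψ w.1
  hlabel_sub := by
    intro w
    by_cases hv : ValidT m ψ w.1 <;> simp [hv]
    exact fun x hx => sub_subset_of_mem (lab_mem_sub hv) hx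
  hlabel_closed := by
    intro w α hα
    by_cases hv : ValidT m ψ w.1 <;> simp [hv] at hα ⊢
    exact sub_subset_of_mem hα
  hV := fun _ _ => Iff.rfl
  hC1 := by
    intro α w w' hl hm' hR
    exfalso
    have hR' : TrRel m ψ α w.1 w'.1 := hR
    obtain ⟨σ, i, hi, hx, hw', t, ht⟩ := hR'
    by_cases hv : ValidT m ψ w.1
    swap
    · simp [hv] at hl
    simp only [if_pos hv] at hl
    rcases Nat.eq_zero_or_pos (i % m) with h0 | h0
    · -- w is the source of the cycle
      have hi0 : i = 0 := by
        have := Nat.mod_eq_of_lt hi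
        omega
      subst hi0
      rw [posT, if_pos h0] at hx
      obtain ⟨hts, htn⟩ := ht
      apply htn
      have hvσ : ValidT m ψ σ := hx ▸ hv
      have hsubψ : boxn (deg α + 0 + t*m + 1) (core α) ∈ ψ.sub :=
        sub_subset_of_mem (lab_mem_sub hvσ) hts
      have himp : Prov m 0 true ((boxn (deg α + 1) (core α)).imp
          (boxn (deg α + 0 + t*m + 1) (core α))) := by
        apply ax0_le (by omega)
        rw [show deg α + 0 + t*m + 1 = deg α + 1 + t*m from by omega]
        exact (Nat.add_mul_mod_self_right (deg α + 1) t m).symm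
      refine mcs_imp_closed (mcsT_mcs hψ σ) himp ?_ hsubψ
      rw [← box_eq_boxn_succ α, ← hx]
      exact hm'
    · -- w is an interior cycle world : size contradiction
      rw [posT, if_neg (by omega)] at hx
      have hlab : lab ψ w.1 = core α := by rw [hx]; rfl
      rw [hlab] at hl
      have h1 := fsize_le_of_mem_sub hl
      have h2 := fsize_eq_deg_core α
      simp only [fsize] at h1
      omega
  hC2 := by
    intro α w hl hnm IH
    by_cases hv : ValidT m ψ w.1
    swap
    · simp [hv] at hl
    simp only [if_pos hv] at hl
    rw [box_eq_boxn_succ α] at hl hnm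
    set B := core α with hB
    set k := deg α with hk
    have htrig : TRIG m ψ w.1 B k := ⟨hl, hnm⟩
    have hBsubl : B ∈ (lab ψ w.1).sub := by
      have := mem_sub_of_boxn_le (Nat.zero_le (k+1)) hl
      simpa using this
    have hBsub : B ∈ ψ.sub := sub_subset_of_mem (lab_mem_sub hv) hBsubl
    have hnprovB : ¬ Prov m 0 true B := by
      intro hp
      have hbig : Prov m 0 true (boxn (k+1) B) := nec_iter (k+1) hp
      exact hnm (mcs_thm (mcsT_mcs hψ w.1) hbig (sub_subset_of_mem (lab_mem_sub hv) hl))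
    -- the cycle worlds
    have hposmem : ∀ p, posT m w.1 B p ∈ TS m ψ (fsize ψ) := by
      intro p
      rw [posT]
      split
      · exact w.2
      · apply mem_TS_of (fsize ψ)
        · have := valid_bound hv
          have := fsize_pos (lab ψ w.1)
          simp only [List.length_cons]
          omega
        · intro e he
          rcases List.mem_cons.mp he with rfl | he
          · exact ⟨hBsub, Nat.mod_lt _ (by omega)⟩
          · exact valid_entries hv e he
    let c : ℕ → TrW m ψ := fun p => ⟨posT m w.1 B p, hposmem p⟩
    have hc1 : ∀ p, (c p).1 = posT m w.1 B p := fun _ => rfl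
    have hvalidc : ∀ p, ValidT m ψ (c p).1 := by
      intro p
      rw [hc1, posT]
      split
      · exact hv
      · exact ⟨hv, by omega, Nat.mod_lt _ (by omega), hBsub, hnprovB, ⟨k, htrig⟩⟩
    -- edges along the chain
    have hedge : ∀ j, j ≤ k → TrRel m ψ (boxn j B) (c (k - j)).1 (c (k - j + 1)).1 := by
      intro j hj
      refine ⟨w.1, (k-j) % m, Nat.mod_lt _ (by omega), ?_, ?_, ?_⟩
      · rw [hc1, core_boxn, hB, core_core]
        exact posT_mod w.1 B (k-j)
      · rw [hc1, core_boxn, hB, core_core]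
        exact posT_congr ((Nat.mod_modEq (k-j) m).add_right 1).symm
      · refine ⟨(k-j)/m, ?_⟩
        rw [core_boxn, hB, core_core]
        have harith : deg (boxn j B) + (k-j) % m + (k-j)/m * m = k := by
          have h1 := Nat.mod_add_div' (k-j) m
          have h2 : deg (boxn j B) = j := by
            simp [deg_boxn, hB, deg_core]
          omega
        rw [harith]
        exact htrig
    -- the failure chain
    have hchain : ∀ j, j ≤ k → ¬ Sat ⟨TrR m ψ, fun w p => Formula.var p ∈ mcsT m ψ w.1⟩
        (c (k + 1 - j)) (boxn j B) := by
      intro j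
      induction j with
      | zero =>
          intro _
          simp only [boxn_zero, Nat.sub_zero]
          by_cases h0 : (k+1) % m = 0
          · have hcw : (c (k+1)).1 = w.1 := by rw [hc1, posT, if_pos h0]
            have hcww : c (k+1) = w := Subtype.ext hcw
            rw [hcww]
            have hBlab : B ∈ (if ValidT m ψ w.1 then (lab ψ w.1).sub else ∅) := by
              rw [if_pos hv]; exact hBsubl
            rw [IH B w (by rw [hB]; exact fsize_core_le α) hBlab]
            intro hmem
            apply htrig.2
            refine mcs_imp_closed (mcsT_mcs hψ w.1) ?_ hmem
              (sub_subset_of_mem (lab_mem_sub hv) hl)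
            have : Prov m 0 true ((boxn 0 B).imp (boxn (k+1) B)) :=
              ax0_le (by omega) (by simpa using h0.symm)
            simpa using this
          · have hcw : (c (k+1)).1 = (B, (k+1) % m) :: w.1 := by
              rw [hc1, posT, if_neg h0]
            have hBlab : B ∈ (if ValidT m ψ (c (k+1)).1
                then (lab ψ (c (k+1)).1).sub else ∅) := by
              rw [if_pos (hvalidc (k+1)), hcw]
              exact mem_sub_self B
            rw [IH B (c (k+1)) (by rw [hB]; exact fsize_core_le α) hBlab]
            intro hmem
            have hmem' : B ∈ mcsT m ψ ((B, (k+1) % m) :: w.1) := by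
              rw [← hcw]; exact hmem
            exact mcs_not_both (Zw_spec hψ hBsub hnprovB).1 hmem'
              (Zw_spec hψ hBsub hnprovB).2
      | succ j ihj =>
          intro hj1
          rw [show k + 1 - (j + 1) = k - j from by omega]
          intro hSat
          have hnext := ihj (by omega)
          have hedge2 : TrR m ψ (boxn j B) (c (k - j)) (c (k - j + 1)) :=
            hedge j (by omega)
          have hS2 := hSat (c (k - j + 1)) hedge2
          rw [show k - j + 1 = k + 1 - j from by omega] at hS2
          exact hnext hS2
    -- conclude
    refine ⟨c 1, ?_, ?_⟩
    · show TrRel m ψ α w.1 (c 1).1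
      refine ⟨w.1, 0, by omega, ?_, ?_, 0, ?_⟩
      · rw [posT, if_pos (by simp)]
      · rw [hc1]
      · rw [show deg α + 0 + 0 * m = k from by omega]
        exact htrig
    · have := hchain k le_rfl
      rw [show k + 1 - k = 1 from by omega] at this
      rw [show boxn k B = α from boxn_core_deg α] at this
      exact this

open Classical in
lemma trace_refute (m : ℕ) (ψ : Formula) (hm : 1 ≤ m)
    (h : ∀ (W : Type) [Fintype W] [Nonempty W] (R : NFrame W),
      SubAcc R m 0 ψ.sub → ValidF R ψ)
    (hψ : ¬ Prov m 0 true ψ) : False := by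
  have hroot_mem : ([] : List (Formula × ℕ)) ∈ TS m ψ (fsize ψ) :=
    mem_TS_of (fsize ψ) (by simp) (by simp)
  have hne : Nonempty (TrW m ψ) := ⟨⟨[], hroot_mem⟩⟩
  have hval := h (TrW m ψ) (TrR m ψ) (tr_subacc hm)
    (fun w p => Formula.var p ∈ mcsT m ψ w.1) ⟨[], hroot_mem⟩
  have hlab : ψ ∈ (tr_good m ψ hm hψ).label ⟨[], hroot_mem⟩ := by
    show ψ ∈ if ValidT m ψ ([] : List (Formula × ℕ)) then
      (lab ψ ([] : List (Formula × ℕ))).sub else ∅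
    rw [if_pos (show ValidT m ψ [] from trivial)]
    exact mem_sub_self ψ
  have hmem := (good_truth (tr_good m ψ hm hψ) ψ ⟨[], hroot_mem⟩ hlab).mp hval
  exact mcs_not_both (rootW_spec hψ).1 hmem (rootW_spec hψ).2

end NRA

theorem stmt14 (m n : ℕ) (ψ : Formula)
    (h : ∀ (W : Type) [Fintype W] [Nonempty W] (R : NFrame W),
      SubAcc R m n ψ.sub → ValidF R ψ) :
    Prov m n true ψ := by
  by_contra hψ
  rcases Nat.eq_zero_or_pos n with hn0 | hn
  · subst hn0
    rcases Nat.eq_zero_or_pos m with hm0 | hm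
    · subst hm0
      exact NRA.canonical_refute 0 0 ψ h hψ (fun φ _ x y hp => hp)
    · exact NRA.trace_refute m ψ hm h hψ
  · exact NRA.canonical_refute m n ψ h hψ (NRA.can_subacc hψ hn)
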